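/- Vertex comparison for adjacent vertices: let E be an edge set on Fin n and a ≠ b vertices with s(a,b) ∈ E. If the transposition swapping a and b is an automorphism of the graph (the image of E under swapping a and b equals E), then Y_a Y_b |G_E⟩ = |G_E⟩, where Y_v = i · X_v · Z_v. -/
import Mathlib


open Finset

/-- An `n`-qubit state: a vector of amplitudes indexed by bit strings `S : Fin n → Bool`. -/
abbrev QState (n : ℕ) := (Fin n → Bool) → ℂ

open scoped Classical in
/-- `edgeCount E S` is the number of edges of `E` all of whose endpoints `v` satisfy
`S v = true` (a self-loop `s(v,v)` counts when `S v = true`). -/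
noncomputable def edgeCount {n : ℕ} (E : Finset (Sym2 (Fin n))) (S : Fin n → Bool) : ℕ :=
  (E.filter fun e => ∀ v ∈ e, S v = true).card

/-- The graph state `|G_E⟩` of the (multi)graph on `Fin n` with edge set `E`:
its amplitude at `S` is `(-1) ^ (edgeCount E S) * 2 ^ (-n/2)`. -/
noncomputable def graphState {n : ℕ} (E : Finset (Sym2 (Fin n))) : QState n :=
  fun S => (-1 : ℂ) ^ edgeCount E S * (((Real.sqrt 2)⁻¹ ^ n : ℝ) : ℂ)

/-- Pauli `Z` on qubit `a`:  `(Z_a ψ) S = (-1) ^ (S a) * ψ S`. -/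
noncomputable def Zgate {n : ℕ} (a : Fin n) : QState n → QState n :=
  fun ψ S => (if S a then -1 else 1) * ψ S

/-- Pauli `X` on qubit `a`:  `(X_a ψ) S = ψ S'` where `S'` is `S` with bit `a` flipped. -/
noncomputable def Xgate {n : ℕ} (a : Fin n) : QState n → QState n :=
  fun ψ S => ψ (Function.update S a (!S a))

/-- Controlled-`Z` on qubits `a`, `b`:  `(CZ_{a,b} ψ) S = (-1) ^ (S a * S b) * ψ S`. -/
noncomputable def CZgate {n : ℕ} (a b : Fin n) : QState n → QState n :=
  fun ψ S => (if S a && S b then -1 else 1) * ψ S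

/-- Hadamard gate on qubit `a`. -/
noncomputable def Hgate {n : ℕ} (a : Fin n) : QState n → QState n :=
  fun ψ S => ((Real.sqrt 2 : ℝ) : ℂ)⁻¹ *
    ∑ t : Bool, (if S a && t then -1 else 1) * ψ (Function.update S a t)

/-- The neighbourhood `N(v)` of `v` in the graph with edge set `E`. -/
noncomputable def nbhd {n : ℕ} (E : Finset (Sym2 (Fin n))) (v : Fin n) : Finset (Fin n) :=
  Finset.univ.filter fun u => s(u, v) ∈ E

/-- The inner product `⟨φ, ψ⟩ = ∑ S, conj (φ S) * ψ S`. -/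
noncomputable def qInner {n : ℕ} (φ ψ : QState n) : ℂ :=
  ∑ S : Fin n → Bool, (starRingEnd ℂ) (φ S) * ψ S

/-- Pauli `Y` on qubit `a`:  `Y_a = i · X_a · Z_a`. -/
noncomputable def Ygate {n : ℕ} (a : Fin n) : QState n → QState n :=
  fun ψ S => Complex.I * Xgate a (Zgate a ψ) S

open scoped Classical in
noncomputable def chi {n : ℕ} (S : Fin n → Bool) (e : Sym2 (Fin n)) : ℂ :=
  if ∀ v ∈ e, S v = true then -1 else 1

lemma chi_pair {n : ℕ} (S : Fin n → Bool) (x y : Fin n) :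
    chi S s(x, y) = if S x = true ∧ S y = true then (-1 : ℂ) else 1 := by
  classical
  have h : (∀ v ∈ s(x, y), S v = true) ↔ (S x = true ∧ S y = true) := by
    simp [Sym2.mem_iff]
  rw [chi, if_congr h rfl rfl]

lemma chi_sq {n : ℕ} (S : Fin n → Bool) (e : Sym2 (Fin n)) : chi S e * chi S e = 1 := by
  classical
  rw [chi]; split_ifs <;> norm_num

lemma chi_map {n : ℕ} (S : Fin n → Bool) (σ : Fin n → Fin n) (e : Sym2 (Fin n)) :
    chi S (Sym2.map σ e) = chi (fun v => S (σ v)) e := by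
  induction e using Sym2.ind with
  | _ x y => rw [Sym2.map_pair_eq, chi_pair, chi_pair]

lemma quad {n : ℕ} (S : Fin n → Bool) (a b : Fin n) (hab : a ≠ b) (x y : Fin n) :
    ((if S (Equiv.swap a b x) = true ∧ S (Equiv.swap a b y) = true then (-1 : ℂ) else 1) *
     (if S x = true ∧ S y = true then (-1 : ℂ) else 1)) *
    ((if (Function.update (Function.update S a (!S a)) b (!S b)) (Equiv.swap a b x) = true ∧
         (Function.update (Function.update S a (!S a)) b (!S b)) (Equiv.swap a b y) = true
       then (-1 : ℂ) else 1) *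
     (if (Function.update (Function.update S a (!S a)) b (!S b)) x = true ∧
         (Function.update (Function.update S a (!S a)) b (!S b)) y = true
       then (-1 : ℂ) else 1)) = 1 := by
  have hσ : ∀ v, Equiv.swap a b v = if v = a then b else if v = b then a else v := by
    intro v; rw [Equiv.swap_apply_def]
  have hS2 : ∀ v, (Function.update (Function.update S a (!S a)) b (!S b)) v
      = if v = b then !S b else if v = a then !S a else S v := by
    intro v; simp [Function.update_apply]
  simp only [hσ, hS2]
  by_cases hx : x = a <;> by_cases hx' : x = b <;> by_cases hy : y = a <;> by_cases hy' : y = b <;>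
    simp_all <;>
    cases hA : S a <;> cases hB : S b <;> cases hX : S x <;> cases hY : S y <;>
    simp_all

lemma map_swap_invol {n : ℕ} (a b : Fin n) (e : Sym2 (Fin n)) :
    Sym2.map (Equiv.swap a b) (Sym2.map (Equiv.swap a b) e) = e := by
  rw [Sym2.map_map]
  have h : (Equiv.swap a b : Fin n → Fin n) ∘ (Equiv.swap a b) = id :=
    funext (Equiv.swap_apply_self a b)
  rw [h, Sym2.map_id, id]

lemma pair_one {n : ℕ} (S : Fin n → Bool) (a b : Fin n) (hab : a ≠ b) (e : Sym2 (Fin n)) :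
    (chi (fun v => (Function.update (Function.update S a (!S a)) b (!S b)) (Equiv.swap a b v)) e
      * chi S e) *
    (chi (fun v => (Function.update (Function.update S a (!S a)) b (!S b)) (Equiv.swap a b v))
        (Sym2.map (Equiv.swap a b) e)
      * chi S (Sym2.map (Equiv.swap a b) e)) = 1 := by
  rw [chi_map, chi_map]
  have hUσ : (fun v => (Function.update (Function.update S a (!S a)) b (!S b))
      (Equiv.swap a b (Equiv.swap a b v)))
      = Function.update (Function.update S a (!S a)) b (!S b) := by
    funext v; rw [Equiv.swap_apply_self]
  have h2 : (fun v => (fun w => (Function.update (Function.update S a (!S a)) b (!S b))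
      (Equiv.swap a b w)) (Equiv.swap a b v))
      = Function.update (Function.update S a (!S a)) b (!S b) := hUσ
  rw [h2]
  induction e using Sym2.ind with
  | _ x y =>
    rw [chi_pair, chi_pair, chi_pair, chi_pair]
    have h := quad S a b hab x y
    calc _ = ((if S (Equiv.swap a b x) = true ∧ S (Equiv.swap a b y) = true then (-1 : ℂ) else 1) *
     (if S x = true ∧ S y = true then (-1 : ℂ) else 1)) *
    ((if (Function.update (Function.update S a (!S a)) b (!S b)) (Equiv.swap a b x) = true ∧
         (Function.update (Function.update S a (!S a)) b (!S b)) (Equiv.swap a b y) = true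
       then (-1 : ℂ) else 1) *
     (if (Function.update (Function.update S a (!S a)) b (!S b)) x = true ∧
         (Function.update (Function.update S a (!S a)) b (!S b)) y = true
       then (-1 : ℂ) else 1)) := by ring
      _ = 1 := h

lemma fix_one {n : ℕ} (S : Fin n → Bool) (a b : Fin n) (hab : a ≠ b) (e : Sym2 (Fin n))
    (he' : e ≠ s(a, b)) (hfix : Sym2.map (Equiv.swap a b) e = e) :
    chi (fun v => (Function.update (Function.update S a (!S a)) b (!S b)) (Equiv.swap a b v)) e
      * chi S e = 1 := by
  induction e using Sym2.ind with
  | _ x y =>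
    rw [Sym2.map_pair_eq, Sym2.eq_iff] at hfix
    have havoid : x ≠ a ∧ x ≠ b ∧ y ≠ a ∧ y ≠ b := by
      rcases hfix with ⟨h1, h2⟩ | ⟨h1, h2⟩
      · refine ⟨?_, ?_, ?_, ?_⟩
        · intro h; subst h; rw [Equiv.swap_apply_left] at h1; exact hab h1.symm
        · intro h; subst h; rw [Equiv.swap_apply_right] at h1; exact hab h1
        · intro h; subst h; rw [Equiv.swap_apply_left] at h2; exact hab h2.symm
        · intro h; subst h; rw [Equiv.swap_apply_right] at h2; exact hab h2
      · by_cases hx : x = a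
        · exfalso; apply he'; subst hx
          rw [Equiv.swap_apply_left] at h1; rw [← h1]
        · by_cases hx' : x = b
          · exfalso; apply he'; subst hx'
            rw [Equiv.swap_apply_right] at h1; rw [← h1, Sym2.eq_swap]
          · have hx2 : Equiv.swap a b x = x := Equiv.swap_apply_of_ne_of_ne hx hx'
            rw [hx2] at h1
            subst h1
            exact ⟨hx, hx', hx, hx'⟩
    obtain ⟨hxa, hxb, hya, hyb⟩ := havoid
    have hUx : (Function.update (Function.update S a (!S a)) b (!S b)) (Equiv.swap a b x) = S x := by
      rw [Equiv.swap_apply_of_ne_of_ne hxa hxb, Function.update_of_ne hxb,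
        Function.update_of_ne hxa]
    have hUy : (Function.update (Function.update S a (!S a)) b (!S b)) (Equiv.swap a b y) = S y := by
      rw [Equiv.swap_apply_of_ne_of_ne hya hyb, Function.update_of_ne hyb,
        Function.update_of_ne hya]
    rw [chi_pair, chi_pair, hUx, hUy]
    split_ifs <;> norm_num

lemma prod_chi_flip {n : ℕ} (E : Finset (Sym2 (Fin n))) (a b : Fin n) (hab : a ≠ b)
    (hadj : s(a, b) ∈ E) (haut : E.image (Sym2.map (Equiv.swap a b)) = E)
    (S : Fin n → Bool) :
    (∏ e ∈ E, chi (Function.update (Function.update S a (!S a)) b (!S b)) e)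
      = (if S a = S b then -1 else 1) * ∏ e ∈ E, chi S e := by
  classical
  have hmem : ∀ e ∈ E, Sym2.map (Equiv.swap a b) e ∈ E := fun e he =>
    haut ▸ Finset.mem_image_of_mem _ he
  -- Step 1: reindex by the swap
  have step1 : (∏ e ∈ E, chi (Function.update (Function.update S a (!S a)) b (!S b)) e)
      = ∏ e ∈ E, chi (fun v =>
          (Function.update (Function.update S a (!S a)) b (!S b)) (Equiv.swap a b v)) e := by
    conv_lhs => rw [← haut]
    rw [Finset.prod_image (fun e _ e' _ h =>
      Sym2.map.injective (Equiv.injective (Equiv.swap a b)) h)]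
    exact Finset.prod_congr rfl fun e _ =>
      chi_map (Function.update (Function.update S a (!S a)) b (!S b)) (Equiv.swap a b) e
  have herase : (∏ e ∈ E.erase s(a, b),
      chi (fun v => (Function.update (Function.update S a (!S a)) b (!S b)) (Equiv.swap a b v)) e
        * chi S e) = 1 := by
    refine Finset.prod_involution (fun e _ => Sym2.map (Equiv.swap a b) e)
      (fun e _ => pair_one S a b hab e) ?_ ?_ ?_
    · intro e he hne hfix
      exact hne (fix_one S a b hab e (Finset.ne_of_mem_erase he) hfix)
    · intro e he
      rw [Finset.mem_erase] at he ⊢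
      refine ⟨?_, hmem e he.2⟩
      intro h
      apply he.1
      have h2 := congrArg (Sym2.map (Equiv.swap a b)) h
      rw [map_swap_invol] at h2
      rw [h2, Sym2.map_pair_eq, Equiv.swap_apply_left, Equiv.swap_apply_right, Sym2.eq_swap]
    · intro e he; exact map_swap_invol a b e
  have hsplit : (∏ e ∈ E,
      chi (fun v => (Function.update (Function.update S a (!S a)) b (!S b)) (Equiv.swap a b v)) e
        * chi S e)
      = (chi (fun v => (Function.update (Function.update S a (!S a)) b (!S b)) (Equiv.swap a b v))
            s(a, b) * chi S s(a, b))
        * ∏ e ∈ E.erase s(a, b),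
            chi (fun v => (Function.update (Function.update S a (!S a)) b (!S b))
              (Equiv.swap a b v)) e * chi S e :=
    (Finset.mul_prod_erase E _ hadj).symm
  have hsign : chi (fun v => (Function.update (Function.update S a (!S a)) b (!S b))
        (Equiv.swap a b v)) s(a, b) * chi S s(a, b) = if S a = S b then -1 else 1 := by
    simp only [chi_pair]
    rw [Equiv.swap_apply_left, Equiv.swap_apply_right, Function.update_self,
      Function.update_of_ne hab, Function.update_self]
    cases hA : S a <;> cases hB : S b <;> simp
  have hP : (∏ e ∈ E, chi (fun v => (Function.update (Function.update S a (!S a)) b (!S b))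
        (Equiv.swap a b v)) e) * (∏ e ∈ E, chi S e) = if S a = S b then -1 else 1 := by
    rw [← Finset.prod_mul_distrib, hsplit, herase, mul_one, hsign]
  have hsq : (∏ e ∈ E, chi S e) * (∏ e ∈ E, chi S e) = 1 := by
    rw [← Finset.prod_mul_distrib]
    exact Finset.prod_eq_one fun e _ => chi_sq S e
  rw [step1]
  calc (∏ e ∈ E, chi (fun v => (Function.update (Function.update S a (!S a)) b (!S b))
        (Equiv.swap a b v)) e)
      = (∏ e ∈ E, chi (fun v => (Function.update (Function.update S a (!S a)) b (!S b))
        (Equiv.swap a b v)) e) * ((∏ e ∈ E, chi S e) * (∏ e ∈ E, chi S e)) := by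
        rw [hsq, mul_one]
    _ = ((∏ e ∈ E, chi (fun v => (Function.update (Function.update S a (!S a)) b (!S b))
        (Equiv.swap a b v)) e) * (∏ e ∈ E, chi S e)) * (∏ e ∈ E, chi S e) := by ring
    _ = (if S a = S b then -1 else 1) * ∏ e ∈ E, chi S e := by rw [hP]

lemma pow_edgeCount {n : ℕ} (E : Finset (Sym2 (Fin n))) (S : Fin n → Bool) :
    (-1 : ℂ) ^ edgeCount E S = ∏ e ∈ E, chi S e := by
  classical
  rw [edgeCount, ← Finset.prod_const, Finset.prod_filter]
  exact Finset.prod_congr rfl fun e _ => by rw [chi]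

/-- Vertex comparison for adjacent vertices: if swapping `a` and `b` is an automorphism
of the graph and `s(a,b) ∈ E`, then `Y_a Y_b` stabilises the graph state. -/
theorem stmt17 {n : ℕ} (E : Finset (Sym2 (Fin n))) (a b : Fin n) (hab : a ≠ b)
    (hadj : s(a, b) ∈ E) (haut : E.image (Sym2.map (Equiv.swap a b)) = E) :
    Ygate a (Ygate b (graphState E)) = graphState E := by
  funext S
  simp only [Ygate, Xgate, Zgate, Function.update_self, Function.update_of_ne hab.symm,
    Function.update_of_ne hab]
  rw [graphState, graphState, pow_edgeCount, pow_edgeCount, prod_chi_flip E a b hab hadj haut S]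
  cases hA : S a <;> cases hB : S b <;>
    simp [hA, hB] <;> ring_nf <;> simp [Complex.I_sq]
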